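/- Fix a positive integer p and a real ε > 0. For each integer n > p + 1 and each real r ≥ ε, set δ = −(p+1)/n and define g_n(r) = p·(log(n/2) − 1) − (2/n)·Σ_{j=1}^{p} [log Γ((n(1+r)+1−j)/2) − log Γ((nr+1−j)/2)] + p·(1+r)·log(1+r+δ) − p·r·log(r+δ), where Γ is the real Gamma function. Then sup_{r ∈ [ε,∞)} |g_n(r)| → 0 as n → ∞; that is, g_n converges to 0 uniformly on [ε,∞). -/

import Mathlib

open Filter

/-- The function `g_n(r)` from the statement, with `δ = -(p+1)/n`. -/
noncomputable def gfun (p : ℕ) (n : ℕ) (r : ℝ) : ℝ :=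
  (p : ℝ) * (Real.log ((n : ℝ) / 2) - 1) -
    (2 / (n : ℝ)) * ∑ j ∈ Finset.Icc 1 p,
      (Real.log (Real.Gamma (((n : ℝ) * (1 + r) + 1 - (j : ℝ)) / 2)) -
        Real.log (Real.Gamma (((n : ℝ) * r + 1 - (j : ℝ)) / 2))) +
    (p : ℝ) * (1 + r) * Real.log (1 + r + (-((p : ℝ) + 1) / (n : ℝ))) -
    (p : ℝ) * r * Real.log (r + (-((p : ℝ) + 1) / (n : ℝ)))

theorem aux_log_factorial : ∃ (N : ℕ) (K : ℝ), ∀ n : ℕ, N ≤ n →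
    |Real.log (n.factorial : ℝ) - (((n : ℝ) + 1/2) * Real.log n - n)| ≤ K := by
  have h1 : Tendsto (fun n => Real.log (Stirling.stirlingSeq n)) atTop
      (nhds (Real.log (Real.sqrt Real.pi))) :=
    Stirling.tendsto_stirlingSeq_sqrt_pi.log (ne_of_gt (Real.sqrt_pos.2 Real.pi_pos))
  have h2 : ∀ᶠ n : ℕ in atTop, |Real.log (Stirling.stirlingSeq n) - Real.log (Real.sqrt Real.pi)| ≤ 1 := by
    have := Metric.tendsto_nhds.1 h1 1 one_pos
    filter_upwards [this] with n hn
    rw [Real.dist_eq] at hn; exact hn.le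
  rw [eventually_atTop] at h2
  obtain ⟨N, hN⟩ := h2
  refine ⟨N + 1, 1 + |Real.log (Real.sqrt Real.pi)| + 1/2 * Real.log 2, fun n hn => ?_⟩
  have hn1 : 1 ≤ n := le_trans (Nat.le_add_left 1 N) hn
  have hnR : (0:ℝ) < n := by exact_mod_cast hn1
  have hform := Stirling.log_stirlingSeq_formula n
  have hlogdiv : Real.log ((n : ℝ) / Real.exp 1) = Real.log n - 1 := by
    rw [Real.log_div hnR.ne' (Real.exp_ne_zero 1), Real.log_exp]
  have hlog2n : Real.log (2 * (n:ℝ)) = Real.log 2 + Real.log n := by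
    rw [Real.log_mul two_ne_zero hnR.ne']
  have key : Real.log (n.factorial : ℝ) - (((n : ℝ) + 1/2) * Real.log n - n) =
      Real.log (Stirling.stirlingSeq n) + 1/2 * Real.log 2 := by
    rw [hform, hlog2n, hlogdiv]; ring
  rw [key]
  have := hN n (le_trans (Nat.le_succ N) hn)
  have hlog2 : (0:ℝ) ≤ Real.log 2 := Real.log_nonneg one_le_two
  have h3 : |Real.log (Stirling.stirlingSeq n)| ≤ |Real.log (Stirling.stirlingSeq n) - Real.log (Real.sqrt Real.pi)| + |Real.log (Real.sqrt Real.pi)| := by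
    have h4 := abs_add_le (Real.log (Stirling.stirlingSeq n) - Real.log (Real.sqrt Real.pi)) (Real.log (Real.sqrt Real.pi))
    simpa using h4
  have h5 := abs_add_le (Real.log (Stirling.stirlingSeq n)) (1/2 * Real.log 2)
  have h6 : |1/2 * Real.log 2| = 1/2 * Real.log 2 := abs_of_nonneg (by positivity)
  rw [h6] at h5
  linarith

theorem aux_E_bound : ∃ (X M : ℝ), 2 ≤ X ∧ 0 ≤ M ∧ ∀ x : ℝ, X ≤ x →
    |Real.log (Real.Gamma x) - ((x - 1/2) * Real.log x - x)| ≤ M := by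
  obtain ⟨N, K, hK⟩ := aux_log_factorial
  have hK0 : 0 ≤ K := le_trans (abs_nonneg _) (hK N le_rfl)
  refine ⟨(N : ℝ) + 2, K + 3, by linarith [Nat.cast_nonneg (α := ℝ) N], by linarith, fun x hx => ?_⟩
  have hx0 : (0:ℝ) < x := by linarith [Nat.cast_nonneg (α := ℝ) N]
  set m := ⌊x⌋₊ with hmdef
  have hmN2 : N + 2 ≤ m := Nat.le_floor (by push_cast; linarith)
  have hm2 : 2 ≤ m := le_trans (Nat.le_add_left 2 N) hmN2
  have hmN : N ≤ m := le_trans (Nat.le_add_right N 2) hmN2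
  have hmx : (m : ℝ) ≤ x := Nat.floor_le hx0.le
  have hxm : x < (m : ℝ) + 1 := Nat.lt_floor_add_one x
  have hm0R : (0:ℝ) < m := by exact_mod_cast lt_of_lt_of_le two_pos hm2
  have hm2R : (2:ℝ) ≤ m := by exact_mod_cast hm2
  have hm1R : (1:ℝ) ≤ (m:ℝ) - 1 := by linarith
  have hΓmpos : 0 < Real.Gamma (m:ℝ) := Real.Gamma_pos_of_pos hm0R
  have hΓm1pos : 0 < Real.Gamma ((m:ℝ)-1) := Real.Gamma_pos_of_pos (by linarith)
  have hstep1 : Real.log (Real.Gamma ((m:ℝ)+1)) = Real.log (Real.Gamma (m:ℝ)) + Real.log (m:ℝ) := by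
    rw [Real.Gamma_add_one hm0R.ne', Real.log_mul hm0R.ne' hΓmpos.ne']; exact add_comm _ _
  have hstep0 : Real.log (Real.Gamma ((m:ℝ))) = Real.log ((m:ℝ)-1) + Real.log (Real.Gamma ((m:ℝ)-1)) := by
    have h := Real.Gamma_add_one (show ((m:ℝ)-1) ≠ 0 by linarith)
    rw [show ((m:ℝ)-1)+1 = (m:ℝ) by ring] at h
    rw [h, Real.log_mul (by linarith) hΓm1pos.ne']
  have hupper : Real.log (Real.Gamma x) ≤ Real.log (Real.Gamma (m:ℝ)) + (x - m) * Real.log (m:ℝ) := by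
    have hcvx := Real.convexOn_log_Gamma.2 (show (m:ℝ) ∈ Set.Ioi (0:ℝ) from hm0R)
      (show (m:ℝ)+1 ∈ Set.Ioi (0:ℝ) by simp; linarith) (by linarith : (0:ℝ) ≤ 1 - (x - m))
      (by linarith : (0:ℝ) ≤ x - m) (by ring)
    have hc : (1-(x-m)) • (m:ℝ) + (x-m) • ((m:ℝ)+1) = x := by simp [smul_eq_mul]; ring
    rw [hc] at hcvx
    simp only [Function.comp] at hcvx
    calc Real.log (Real.Gamma x)
        ≤ (1-(x-m)) * Real.log (Real.Gamma (m:ℝ)) + (x-m) * Real.log (Real.Gamma ((m:ℝ)+1)) := hcvx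
      _ = Real.log (Real.Gamma (m:ℝ)) + (x-m) * Real.log (m:ℝ) := by rw [hstep1]; ring
  have hlower : Real.log (Real.Gamma (m:ℝ)) + (x - m) * Real.log ((m:ℝ)-1) ≤ Real.log (Real.Gamma x) := by
    rcases eq_or_lt_of_le hmx with h | h
    · rw [← h]; simp
    · have hs := Real.convexOn_log_Gamma.slope_mono_adjacent
        (show (m:ℝ)-1 ∈ Set.Ioi (0:ℝ) by simp; linarith) (show x ∈ Set.Ioi (0:ℝ) from hx0)
        (show (m:ℝ)-1 < (m:ℝ) by linarith) h
      simp only [Function.comp] at hs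
      rw [show (m:ℝ) - ((m:ℝ)-1) = 1 by ring, div_one] at hs
      have h2 : Real.log ((m:ℝ)-1) ≤ (Real.log (Real.Gamma x) - Real.log (Real.Gamma (m:ℝ))) / (x - m) := by
        calc Real.log ((m:ℝ)-1)
            = Real.log (Real.Gamma (m:ℝ)) - Real.log (Real.Gamma ((m:ℝ)-1)) := by rw [hstep0]; ring
          _ ≤ _ := hs
      have h3 := (le_div_iff₀ (by linarith : (0:ℝ) < x - (m:ℝ))).1 h2
      nlinarith [h3]
  have hGfact : Real.log (Real.Gamma (m:ℝ)) = Real.log (m.factorial : ℝ) - Real.log (m:ℝ) := by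
    have h1 : Real.Gamma ((m:ℝ)) = ((m-1).factorial : ℝ) := by
      have h := Real.Gamma_nat_eq_factorial (m-1)
      rwa [show (((m-1:ℕ)):ℝ) + 1 = (m:ℝ) by
        push_cast [Nat.cast_sub (by omega : 1 ≤ m)]; ring] at h
    have h2 : (m.factorial : ℝ) = (m:ℝ) * ((m-1).factorial : ℝ) := by
      conv_lhs => rw [show m = (m-1)+1 by omega]
      rw [Nat.factorial_succ, Nat.sub_add_cancel (by omega : 1 ≤ m)]; push_cast; ring
    have hf1pos : (0:ℝ) < ((m-1).factorial : ℝ) := by positivity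
    rw [h1, h2, Real.log_mul hm0R.ne' hf1pos.ne']; ring
  have hS := abs_le.1 (hK m hmN)
  have hlm0 : 0 ≤ Real.log (m:ℝ) := Real.log_nonneg (by linarith)
  have hlxlm : Real.log (m:ℝ) ≤ Real.log x := Real.log_le_log hm0R hmx
  have hlxup : Real.log x ≤ Real.log (m:ℝ) + 1/m := by
    have h1 : Real.log x - Real.log (m:ℝ) = Real.log (x / m) := by
      rw [Real.log_div hx0.ne' hm0R.ne']
    have h2 : Real.log (x/m) ≤ x/m - 1 := Real.log_le_sub_one_of_pos (by positivity)
    have h3 : x/m - 1 ≤ 1/m := by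
      rw [div_sub_one hm0R.ne', div_le_div_iff₀ hm0R hm0R]; nlinarith
    linarith
  have hlm1lo : Real.log (m:ℝ) - 1 ≤ Real.log ((m:ℝ)-1) := by
    have h1 : Real.log (m:ℝ) - Real.log ((m:ℝ)-1) = Real.log ((m:ℝ) / ((m:ℝ)-1)) := by
      rw [Real.log_div hm0R.ne' (by linarith : ((m:ℝ)-1) ≠ 0)]
    have h2 : Real.log ((m:ℝ)/((m:ℝ)-1)) ≤ (m:ℝ)/((m:ℝ)-1) - 1 := Real.log_le_sub_one_of_pos (by positivity)
    have h3 : (m:ℝ)/((m:ℝ)-1) - 1 ≤ 1 := by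
      rw [div_sub_one (by linarith : ((m:ℝ)-1) ≠ 0), div_le_one (by linarith)]; linarith
    linarith
  rw [abs_le]
  have hkey : (x - m) * Real.log (m:ℝ) - Real.log (m:ℝ) - (x-1/2) * Real.log (m:ℝ)
      = -(((m:ℝ))+1/2) * Real.log (m:ℝ) := by ring
  constructor
  · have hp3 : (x-m) * (Real.log (m:ℝ) - 1) ≤ (x-m) * Real.log ((m:ℝ)-1) :=
      mul_le_mul_of_nonneg_left hlm1lo (by linarith)
    have hp2a : (x - 1/2) * Real.log x ≤ (x-1/2) * (Real.log (m:ℝ) + 1/m) :=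
      mul_le_mul_of_nonneg_left hlxup (by linarith)
    have hp2e : (x-1/2) * (Real.log (m:ℝ) + 1/m) = (x-1/2) * Real.log (m:ℝ) + (x-1/2) * (1/m) := by ring
    have hp2b : (x-1/2) * (1/(m:ℝ)) ≤ 2 := by
      rw [mul_one_div, div_le_iff₀ hm0R]; linarith
    have hp3e : (x-m) * (Real.log (m:ℝ) - 1) = (x-m) * Real.log (m:ℝ) - (x - m) := by ring
    rw [hGfact] at hlower
    linarith
  · have hp1 : (x - 1/2) * Real.log (m:ℝ) ≤ (x - 1/2) * Real.log x :=
      mul_le_mul_of_nonneg_left hlxlm (by linarith)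
    rw [hGfact] at hupper
    linarith

theorem aux_abs_log_one_add {s : ℝ} (h : -(1/2:ℝ) ≤ s) : |Real.log (1+s)| ≤ 2*|s| := by
  have h1 : (0:ℝ) < 1 + s := by linarith
  rcases le_or_gt 0 s with hs | hs
  · rw [abs_of_nonneg hs, abs_of_nonneg (Real.log_nonneg (by linarith))]
    have := Real.log_le_sub_one_of_pos h1
    linarith
  · rw [abs_of_neg hs, abs_of_nonpos (Real.log_nonpos (by linarith) (by linarith))]
    have h2 : Real.log (1+s)⁻¹ ≤ (1+s)⁻¹ - 1 := Real.log_le_sub_one_of_pos (by positivity)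
    rw [Real.log_inv] at h2
    have h3 : (1+s)⁻¹ ≤ 2 := by
      rw [inv_le_comm₀ h1 two_pos]; linarith
    have h4 : (1+s)⁻¹ - 1 = (-s) * (1+s)⁻¹ := by field_simp; ring
    nlinarith [h2, h3]

theorem aux_abs_log_sub {x y : ℝ} (hy : 0 < y) (h : |x - y| ≤ y/2) :
    |Real.log x - Real.log y| ≤ 2*|x-y|/y := by
  have hxy := abs_le.1 h
  have hx : 0 < x := by linarith [hxy.1]
  rw [← Real.log_div hx.ne' hy.ne', show x/y = 1 + (x-y)/y by field_simp; ring]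
  have h1 : -(1/2:ℝ) ≤ (x-y)/y := by
    rw [le_div_iff₀ hy]; nlinarith [hxy.1]
  have := aux_abs_log_one_add h1
  rw [abs_div, abs_of_pos hy] at this; rw [mul_div_assoc]; exact this

noncomputable def Efun (x : ℝ) : ℝ := Real.log (Real.Gamma x) - ((x - 1/2) * Real.log x - x)

theorem aux_identity (n j p : ℕ) (r u v a b δ : ℝ) (hn : (0:ℝ) < n)
    (hu : 0 < u) (hv : 0 < v)
    (hud : u = r + (1-(j:ℝ))/n) (hvd : v = 1 + u)
    (had : a = ((n:ℝ)*r+1-(j:ℝ))/2) (hbd : b = ((n:ℝ)*(1+r)+1-(j:ℝ))/2)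
    (hδ : δ = -((p:ℝ)+1)/n) :
    (Real.log ((n:ℝ)/2) - 1) + (1+r)*Real.log (1+r+δ) - r*Real.log (r+δ)
     - (2/(n:ℝ))*(Real.log (Real.Gamma b) - Real.log (Real.Gamma a))
    = (1+r)*(Real.log (1+r+δ) - Real.log v) - r*(Real.log (r+δ) - Real.log u)
     - ((1-(j:ℝ))/n)*(Real.log v - Real.log u) + (1/(n:ℝ))*(Real.log v - Real.log u)
     - (2/(n:ℝ))*(Efun b - Efun a) := by
  have hb2 : b = ((n:ℝ)/2) * v := by rw [hbd, hvd, hud]; field_simp; ring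
  have ha2 : a = ((n:ℝ)/2) * u := by rw [had, hud]; field_simp; ring
  have hlb : Real.log b = Real.log ((n:ℝ)/2) + Real.log v := by
    rw [hb2, Real.log_mul (by positivity) hv.ne']
  have hla : Real.log a = Real.log ((n:ℝ)/2) + Real.log u := by
    rw [ha2, Real.log_mul (by positivity) hu.ne']
  have hEb : Real.log (Real.Gamma b) = (b - 1/2)*Real.log b - b + Efun b := by unfold Efun; ring
  have hEa : Real.log (Real.Gamma a) = (a - 1/2)*Real.log a - a + Efun a := by unfold Efun; ring
  rw [hEb, hEa, hlb, hla, hb2, ha2, hvd, hud]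
  field_simp
  ring

theorem stmt19 (p : ℕ) (hp : 0 < p) (ε : ℝ) (hε : 0 < ε) :
    TendstoUniformlyOn (fun n r => gfun p n r) 0 atTop (Set.Ici ε) := by
  obtain ⟨X, M, hX2, hM0, hE⟩ := aux_E_bound
  rw [Metric.tendstoUniformlyOn_iff]
  intro η hη
  have hLε : 0 ≤ Real.log (1+2/ε) := Real.log_nonneg (by nlinarith [div_pos two_pos hε])
  obtain ⟨C, hC⟩ : ∃ C : ℝ, C = 8*((p:ℝ)+1) + ((p:ℝ)+1)*Real.log (1+2/ε) + 4*M := ⟨_, rfl⟩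
  have hC0 : 0 < C := by rw [hC]; positivity
  obtain ⟨n₀, hn₀⟩ := exists_nat_ge (max (max (4*((p:ℝ)+1)/ε) (2*((p:ℝ)+1))) (max (4*X/ε) ((p:ℝ)*C/η)))
  rw [eventually_atTop]
  refine ⟨n₀ + 1, fun n hn r hr => ?_⟩
  have hrε : ε ≤ r := hr
  have hr0 : 0 < r := lt_of_lt_of_le hε hrε
  have hnR : (n₀:ℝ) + 1 ≤ (n:ℝ) := by exact_mod_cast hn
  have hc1 : 4*((p:ℝ)+1)/ε ≤ (n:ℝ) :=
    le_trans (le_trans (le_trans (le_max_left _ _) (le_max_left _ _)) hn₀)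
      (by linarith only [hnR])
  have hc2 : 2*((p:ℝ)+1) ≤ (n:ℝ) :=
    le_trans (le_trans (le_trans (le_max_right _ _) (le_max_left _ _)) hn₀)
      (by linarith only [hnR])
  have hc3 : 4*X/ε ≤ (n:ℝ) :=
    le_trans (le_trans (le_trans (le_max_left _ _) (le_max_right _ _)) hn₀)
      (by linarith only [hnR])
  have hc4 : (p:ℝ)*C/η ≤ (n:ℝ) - 1 :=
    le_trans (le_trans (le_trans (le_max_right _ _) (le_max_right _ _)) hn₀)
      (by linarith only [hnR])
  have hn0 : (0:ℝ) < (n:ℝ) := by linarith only [hc2, Nat.cast_nonneg (α := ℝ) p]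
  have hA : ((p:ℝ)+1)/(n:ℝ) ≤ ε/4 := by
    rw [div_le_div_iff₀ hn0 (by norm_num : (0:ℝ) < 4)]
    have h := (div_le_iff₀ hε).1 hc1
    nlinarith [h]
  have hB : ((p:ℝ)+1)/(n:ℝ) ≤ 1/2 := by
    rw [div_le_div_iff₀ hn0 (by norm_num : (0:ℝ) < 2)]
    linarith only [hc2]
  have hXn : X ≤ (n:ℝ)*ε/4 := by
    rw [le_div_iff₀ (by norm_num : (0:ℝ) < 4)]
    have h := (div_le_iff₀ hε).1 hc3
    nlinarith [h]
  have hηn : (p:ℝ)*C/(n:ℝ) < η := by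
    rw [div_lt_iff₀ hn0]
    have h1 : η*((p:ℝ)*C/η + 1) = (p:ℝ)*C + η := by field_simp
    have h2 : η*((p:ℝ)*C/η + 1) ≤ η*(n:ℝ) :=
      mul_le_mul_of_nonneg_left (by linarith only [hc4]) hη.le
    rw [h1] at h2
    linarith only [h2, hη]
  simp only [Pi.zero_apply, Real.dist_eq, zero_sub, abs_neg]
  have hsum : gfun p n r = ∑ j ∈ Finset.Icc 1 p,
      ((Real.log ((n:ℝ)/2) - 1) + (1+r)*Real.log (1+r+(-((p:ℝ)+1)/(n:ℝ)))
       - r*Real.log (r+(-((p:ℝ)+1)/(n:ℝ)))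
       - (2/(n:ℝ))*(Real.log (Real.Gamma (((n:ℝ)*(1+r)+1-(j:ℝ))/2)) -
           Real.log (Real.Gamma (((n:ℝ)*r+1-(j:ℝ))/2)))) := by
    simp only [gfun, Finset.sum_sub_distrib, Finset.sum_add_distrib, Finset.sum_const,
      Nat.card_Icc, Nat.add_sub_cancel, ← Finset.mul_sum, nsmul_eq_mul]
    ring
  rw [hsum]
  have hbound : ∀ j ∈ Finset.Icc 1 p,
      |(Real.log ((n:ℝ)/2) - 1) + (1+r)*Real.log (1+r+(-((p:ℝ)+1)/(n:ℝ)))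
       - r*Real.log (r+(-((p:ℝ)+1)/(n:ℝ)))
       - (2/(n:ℝ))*(Real.log (Real.Gamma (((n:ℝ)*(1+r)+1-(j:ℝ))/2)) -
           Real.log (Real.Gamma (((n:ℝ)*r+1-(j:ℝ))/2)))| ≤ C/(n:ℝ) := by
    intro j hj
    obtain ⟨hj1, hjp⟩ := Finset.mem_Icc.1 hj
    have hj1R : (1:ℝ) ≤ (j:ℝ) := by exact_mod_cast hj1
    have hjpR : (j:ℝ) ≤ (p:ℝ) := by exact_mod_cast hjp
    obtain ⟨δ, hδd⟩ : ∃ δ : ℝ, δ = -((p:ℝ)+1)/(n:ℝ) := ⟨_, rfl⟩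
    obtain ⟨u, hud⟩ : ∃ u : ℝ, u = r + (1-(j:ℝ))/(n:ℝ) := ⟨_, rfl⟩
    obtain ⟨v, hvd⟩ : ∃ v : ℝ, v = 1 + u := ⟨_, rfl⟩
    obtain ⟨a, had⟩ : ∃ a : ℝ, a = ((n:ℝ)*r+1-(j:ℝ))/2 := ⟨_, rfl⟩
    obtain ⟨b, hbd⟩ : ∃ b : ℝ, b = ((n:ℝ)*(1+r)+1-(j:ℝ))/2 := ⟨_, rfl⟩
    rw [← hδd, ← had, ← hbd]
    have hδ4 : -(ε/4) ≤ δ := by rw [hδd, neg_div]; linarith only [hA]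
    have h1j : -(ε/4) ≤ (1-(j:ℝ))/(n:ℝ) := by
      have h2 : (-((p:ℝ)+1))/(n:ℝ) ≤ (1-(j:ℝ))/(n:ℝ) := by
        gcongr
        linarith only [hj1R, hjpR]
      rw [neg_div] at h2
      linarith only [h2, hA]
    have hu2 : r/2 ≤ u := by rw [hud]; linarith only [h1j, hrε, hε]
    have hu0 : 0 < u := by linarith only [hu2, hr0]
    have hv1 : (1:ℝ) ≤ v := by rw [hvd]; linarith only [hu0]
    have hv0 : (0:ℝ) < v := by linarith only [hv1]
    have hrδ : r/2 ≤ r + δ := by linarith only [hδ4, hrε, hε]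
    have hrδ0 : 0 < r + δ := by linarith only [hrδ, hr0]
    rw [aux_identity n j p r u v a b δ hn0 hu0 hv0 hud hvd had hbd hδd]
    have hdiff1 : (1+r+δ) - v = ((j:ℝ) - (p:ℝ) - 2)/(n:ℝ) := by
      rw [hvd, hud, hδd]; ring
    have hdiff2 : (r+δ) - u = ((j:ℝ) - (p:ℝ) - 2)/(n:ℝ) := by
      rw [hud, hδd]; ring
    have habsnum : |(j:ℝ) - (p:ℝ) - 2| ≤ (p:ℝ)+1 := by
      rw [abs_le]; constructor <;> linarith only [hj1R, hjpR]
    have habs1 : |(1+r+δ) - v| ≤ ((p:ℝ)+1)/(n:ℝ) := by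
      rw [hdiff1, abs_div, abs_of_pos hn0]
      gcongr
    have habs2 : |(r+δ) - u| ≤ ((p:ℝ)+1)/(n:ℝ) := by
      rw [hdiff2, abs_div, abs_of_pos hn0]
      gcongr
    have hT1 : (1+r)*|Real.log (1+r+δ) - Real.log v| ≤ 4*((p:ℝ)+1)/(n:ℝ) := by
      have hd := aux_abs_log_sub hv0
        (by linarith only [habs1, hB, hv1] : |(1+r+δ) - v| ≤ v/2)
      have hq : (1+r)/v ≤ 2 := by
        rw [div_le_iff₀ hv0]; rw [hvd]; linarith only [hu2, hr0]
      calc (1+r)*|Real.log (1+r+δ) - Real.log v|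
          ≤ (1+r)*(2*|(1+r+δ)-v|/v) :=
            mul_le_mul_of_nonneg_left hd (by linarith only [hr0])
        _ ≤ (1+r)*(2*(((p:ℝ)+1)/(n:ℝ))/v) := by gcongr
        _ = ((1+r)/v) * (2*(((p:ℝ)+1)/(n:ℝ))) := by ring
        _ ≤ 2 * (2*(((p:ℝ)+1)/(n:ℝ))) := mul_le_mul_of_nonneg_right hq (by positivity)
        _ = 4*((p:ℝ)+1)/(n:ℝ) := by ring
    have hT2 : r*|Real.log (r+δ) - Real.log u| ≤ 4*((p:ℝ)+1)/(n:ℝ) := by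
      have hd := aux_abs_log_sub hu0
        (by linarith only [habs2, hA, hu2, hrε] : |(r+δ) - u| ≤ u/2)
      have hq : r/u ≤ 2 := by rw [div_le_iff₀ hu0]; linarith only [hu2]
      calc r*|Real.log (r+δ) - Real.log u|
          ≤ r*(2*|(r+δ)-u|/u) := mul_le_mul_of_nonneg_left hd (by linarith only [hr0])
        _ ≤ r*(2*(((p:ℝ)+1)/(n:ℝ))/u) := by gcongr
        _ = (r/u) * (2*(((p:ℝ)+1)/(n:ℝ))) := by ring
        _ ≤ 2 * (2*(((p:ℝ)+1)/(n:ℝ))) := mul_le_mul_of_nonneg_right hq (by positivity)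
        _ = 4*((p:ℝ)+1)/(n:ℝ) := by ring
    have hvu0 : 0 ≤ Real.log v - Real.log u :=
      sub_nonneg.2 (Real.log_le_log hu0 (by linarith only [hvd.ge, hvd.le]))
    have hvuL : Real.log v - Real.log u ≤ Real.log (1+2/ε) := by
      rw [← Real.log_div hv0.ne' hu0.ne']
      apply Real.log_le_log (by positivity)
      rw [div_le_iff₀ hu0]
      have h2u : ε ≤ 2*u := by linarith only [hu2, hrε]
      have he : (1+2/ε)*u = u + 2*u/ε := by ring
      rw [he]
      have h1 : 1 ≤ 2*u/ε := by rw [le_div_iff₀ hε]; linarith only [h2u]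
      rw [hvd]; linarith only [h1]
    have hT34 : |((j:ℝ)/(n:ℝ))*(Real.log v - Real.log u)|
        ≤ ((p:ℝ)+1)*Real.log (1+2/ε)/(n:ℝ) := by
      rw [abs_of_nonneg (mul_nonneg (by positivity) hvu0)]
      calc ((j:ℝ)/(n:ℝ))*(Real.log v - Real.log u)
          ≤ (((p:ℝ)+1)/(n:ℝ))*Real.log (1+2/ε) := by
            apply mul_le_mul _ hvuL hvu0 (by positivity)
            gcongr
            linarith only [hjpR]
        _ = ((p:ℝ)+1)*Real.log (1+2/ε)/(n:ℝ) := by ring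
    have hXa : X ≤ a := by
      have hnr : (n:ℝ)*ε ≤ (n:ℝ)*r := mul_le_mul_of_nonneg_left hrε hn0.le
      have hA' : (p:ℝ)+1 ≤ ε/4*(n:ℝ) := (div_le_iff₀ hn0).1 hA
      rw [had]
      linarith only [hnr, hA', hXn, hjpR]
    have hXb : X ≤ b := by
      have hba : b = a + (n:ℝ)/2 := by rw [had, hbd]; ring
      rw [hba]; linarith only [hXa, hn0]
    have hEb : |Efun b| ≤ M := by simpa [Efun] using hE b hXb
    have hEa : |Efun a| ≤ M := by simpa [Efun] using hE a hXa
    have hT5 : (2/(n:ℝ))*|Efun b - Efun a| ≤ 4*M/(n:ℝ) := by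
      have hd : |Efun b - Efun a| ≤ |Efun b| + |Efun a| := by
        rw [sub_eq_add_neg]
        exact (abs_add_le _ _).trans (by rw [abs_neg])
      calc (2/(n:ℝ))*|Efun b - Efun a| ≤ (2/(n:ℝ))*(M + M) := by
            apply mul_le_mul_of_nonneg_left _ (by positivity)
            linarith only [hd, hEb, hEa]
        _ = 4*M/(n:ℝ) := by ring
    have hgroup : (1+r)*(Real.log (1+r+δ) - Real.log v) - r*(Real.log (r+δ) - Real.log u)
        - ((1-(j:ℝ))/(n:ℝ))*(Real.log v - Real.log u) + (1/(n:ℝ))*(Real.log v - Real.log u)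
        - (2/(n:ℝ))*(Efun b - Efun a)
        = (1+r)*(Real.log (1+r+δ) - Real.log v) + (-(r*(Real.log (r+δ) - Real.log u)))
          + ((j:ℝ)/(n:ℝ))*(Real.log v - Real.log u) + (-((2/(n:ℝ))*(Efun b - Efun a))) := by
      ring
    rw [hgroup]
    have htri : |(1+r)*(Real.log (1+r+δ) - Real.log v) + (-(r*(Real.log (r+δ) - Real.log u)))
          + ((j:ℝ)/(n:ℝ))*(Real.log v - Real.log u) + (-((2/(n:ℝ))*(Efun b - Efun a)))|
        ≤ |(1+r)*(Real.log (1+r+δ) - Real.log v)| + |r*(Real.log (r+δ) - Real.log u)|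
          + |((j:ℝ)/(n:ℝ))*(Real.log v - Real.log u)| + |(2/(n:ℝ))*(Efun b - Efun a)| := by
      calc |(1+r)*(Real.log (1+r+δ) - Real.log v) + (-(r*(Real.log (r+δ) - Real.log u)))
          + ((j:ℝ)/(n:ℝ))*(Real.log v - Real.log u) + (-((2/(n:ℝ))*(Efun b - Efun a)))|
          ≤ |(1+r)*(Real.log (1+r+δ) - Real.log v) + (-(r*(Real.log (r+δ) - Real.log u)))
            + ((j:ℝ)/(n:ℝ))*(Real.log v - Real.log u)| + |(-((2/(n:ℝ))*(Efun b - Efun a)))| :=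
            abs_add_le _ _
        _ ≤ (|(1+r)*(Real.log (1+r+δ) - Real.log v) + (-(r*(Real.log (r+δ) - Real.log u)))|
            + |((j:ℝ)/(n:ℝ))*(Real.log v - Real.log u)|) + |(-((2/(n:ℝ))*(Efun b - Efun a)))| :=
            add_le_add_left (abs_add_le _ _) _
        _ ≤ ((|(1+r)*(Real.log (1+r+δ) - Real.log v)| + |(-(r*(Real.log (r+δ) - Real.log u)))|)
            + |((j:ℝ)/(n:ℝ))*(Real.log v - Real.log u)|) + |(-((2/(n:ℝ))*(Efun b - Efun a)))| :=
            add_le_add_left (add_le_add_left (abs_add_le _ _) _) _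
        _ = _ := by rw [abs_neg, abs_neg]
    have e1 : |(1+r)*(Real.log (1+r+δ) - Real.log v)|
        = (1+r)*|Real.log (1+r+δ) - Real.log v| := by
      rw [abs_mul, abs_of_pos (by linarith only [hr0] : (0:ℝ) < 1+r)]
    have e2 : |r*(Real.log (r+δ) - Real.log u)| = r*|Real.log (r+δ) - Real.log u| := by
      rw [abs_mul, abs_of_pos hr0]
    have e5 : |(2/(n:ℝ))*(Efun b - Efun a)| = (2/(n:ℝ))*|Efun b - Efun a| := by
      rw [abs_mul, abs_of_pos (by positivity : (0:ℝ) < 2/(n:ℝ))]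
    have hCeq : 4*((p:ℝ)+1)/(n:ℝ) + 4*((p:ℝ)+1)/(n:ℝ) + ((p:ℝ)+1)*Real.log (1+2/ε)/(n:ℝ)
        + 4*M/(n:ℝ) = C/(n:ℝ) := by rw [hC]; ring
    rw [e1, e2, e5] at htri
    linarith only [htri, hT1, hT2, hT34, hT5, hCeq]
  calc |∑ j ∈ Finset.Icc 1 p, ((Real.log ((n:ℝ)/2) - 1) + (1+r)*Real.log (1+r+(-((p:ℝ)+1)/(n:ℝ)))
       - r*Real.log (r+(-((p:ℝ)+1)/(n:ℝ)))
       - (2/(n:ℝ))*(Real.log (Real.Gamma (((n:ℝ)*(1+r)+1-(j:ℝ))/2)) -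
           Real.log (Real.Gamma (((n:ℝ)*r+1-(j:ℝ))/2))))|
      ≤ ∑ j ∈ Finset.Icc 1 p, |(Real.log ((n:ℝ)/2) - 1) + (1+r)*Real.log (1+r+(-((p:ℝ)+1)/(n:ℝ)))
       - r*Real.log (r+(-((p:ℝ)+1)/(n:ℝ)))
       - (2/(n:ℝ))*(Real.log (Real.Gamma (((n:ℝ)*(1+r)+1-(j:ℝ))/2)) -
           Real.log (Real.Gamma (((n:ℝ)*r+1-(j:ℝ))/2)))| := Finset.abs_sum_le_sum_abs _ _
    _ ≤ (Finset.Icc 1 p).card • (C/(n:ℝ)) := Finset.sum_le_card_nsmul _ _ _ hbound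
    _ = (p:ℝ) * (C/(n:ℝ)) := by
        rw [Nat.card_Icc, Nat.add_sub_cancel, nsmul_eq_mul]
    _ < η := by
        have he : (p:ℝ) * (C/(n:ℝ)) = (p:ℝ)*C/(n:ℝ) := by ring
        rw [he]; exact hηn
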